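/- Let (Ω, 𝔉, ℙ) be a probability space and let A : Ω → ℝ^{d×d} be a measurable map taking values in symmetric matrices, such that for some constants 0 < c ≤ C, c‖ξ‖² ≤ ξ · A(ω)ξ ≤ C‖ξ‖² for all ξ ∈ ℝᵈ and ℙ-almost every ω. Then for every e ∈ ℝᵈ, the infimum of ∫_Ω (e + V(ω)) · A(ω)(e + V(ω)) dℙ(ω) over all V ∈ L²(Ω, ℙ; ℝᵈ) with ∫_Ω V dℙ = 0 equals e · (∫_Ω A(ω)⁻¹ dℙ(ω))⁻¹ e. Moreover the infimum is attained at V*(ω) = A(ω)⁻¹ λ − e with λ = (∫ A⁻¹ dℙ)⁻¹ e, and the minimizer is unique up to ℙ-almost-everywhere equality. -/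

import Mathlib

open Matrix MeasureTheory

namespace RelaxedAux

variable {d : ℕ} {Ω : Type*} [MeasurableSpace Ω]

lemma dps_nonneg (v : Fin d → ℝ) : 0 ≤ v ⬝ᵥ v :=
  Finset.sum_nonneg fun _ _ => mul_self_nonneg _

lemma cs_form (M : Matrix (Fin d) (Fin d) ℝ) (hs : M.IsSymm)
    (h0 : ∀ x : Fin d → ℝ, 0 ≤ x ⬝ᵥ M *ᵥ x) (x y : Fin d → ℝ) :
    (x ⬝ᵥ M *ᵥ y) ^ 2 ≤ (x ⬝ᵥ M *ᵥ x) * (y ⬝ᵥ M *ᵥ y) := by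
  have hsym : ∀ a b : Fin d → ℝ, a ⬝ᵥ M *ᵥ b = b ⬝ᵥ M *ᵥ a := by
    intro a b
    rw [dotProduct_mulVec, ← hs.eq, vecMul_transpose, dotProduct_comm, hs.eq]
  have key : ∀ t : ℝ, 0 ≤ (y ⬝ᵥ M *ᵥ y) * (t * t) + (2 * (x ⬝ᵥ M *ᵥ y)) * t
      + (x ⬝ᵥ M *ᵥ x) := by
    intro t
    have h := h0 (x + t • y)
    simp only [mulVec_add, mulVec_smul, add_dotProduct, dotProduct_add, smul_dotProduct,
      dotProduct_smul, smul_eq_mul] at h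
    rw [hsym y x] at h
    nlinarith [h]
  have hd2 := discrim_le_zero key
  rw [discrim] at hd2
  nlinarith [hd2]

lemma entry_abs_le (M : Matrix (Fin d) (Fin d) ℝ) (hs : M.IsSymm) (m : ℝ)
    (h0 : ∀ x : Fin d → ℝ, 0 ≤ x ⬝ᵥ M *ᵥ x)
    (hup : ∀ x : Fin d → ℝ, x ⬝ᵥ M *ᵥ x ≤ m * (x ⬝ᵥ x)) (i j : Fin d) :
    |M i j| ≤ m := by
  have hone : ∀ k : Fin d, (Pi.single k 1 : Fin d → ℝ) ⬝ᵥ Pi.single k 1 = 1 := by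
    intro k; rw [single_dotProduct, one_mul, Pi.single_eq_same]
  have hdiag : ∀ k : Fin d, (Pi.single k 1 : Fin d → ℝ) ⬝ᵥ M *ᵥ Pi.single k 1 ≤ m := by
    intro k
    have := hup (Pi.single k 1)
    rwa [hone k, mul_one] at this
  have hm : 0 ≤ m := le_trans (h0 (Pi.single i 1)) (hdiag i)
  have hentry : (Pi.single i 1 : Fin d → ℝ) ⬝ᵥ M *ᵥ Pi.single j 1 = M i j := by
    simp [single_dotProduct, mulVec_single]
  have hcs := cs_form M hs h0 (Pi.single i 1) (Pi.single j 1)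
  rw [hentry] at hcs
  have h1 := hdiag i
  have h2 := hdiag j
  have h3 := h0 (Pi.single i 1)
  have h4 := h0 (Pi.single j 1)
  nlinarith [sq_abs (M i j), abs_nonneg (M i j)]

lemma matrix_package (M : Matrix (Fin d) (Fin d) ℝ) (c C : ℝ) (hc : 0 < c) (hC : 0 < C)
    (hs : M.IsSymm)
    (hb : ∀ ξ : Fin d → ℝ, c * (ξ ⬝ᵥ ξ) ≤ ξ ⬝ᵥ M *ᵥ ξ ∧ ξ ⬝ᵥ M *ᵥ ξ ≤ C * (ξ ⬝ᵥ ξ)) :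
    M * M⁻¹ = 1 ∧ M⁻¹.IsSymm ∧
      (∀ ξ : Fin d → ℝ, C⁻¹ * (ξ ⬝ᵥ ξ) ≤ ξ ⬝ᵥ M⁻¹ *ᵥ ξ ∧ ξ ⬝ᵥ M⁻¹ *ᵥ ξ ≤ c⁻¹ * (ξ ⬝ᵥ ξ)) ∧
      (∀ i j, |M⁻¹ i j| ≤ c⁻¹) := by
  have h0 : ∀ ξ : Fin d → ℝ, 0 ≤ ξ ⬝ᵥ M *ᵥ ξ := fun ξ =>
    le_trans (mul_nonneg hc.le (dps_nonneg ξ)) (hb ξ).1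
  have hherm : M.IsHermitian := by
    show Mᴴ = M
    ext i j
    rw [conjTranspose_apply, star_trivial, hs.apply]
  have hpd : M.PosDef := by
    refine Matrix.PosDef.of_dotProduct_mulVec_pos hherm fun x hx => ?_
    have hxx : 0 < x ⬝ᵥ x :=
      lt_of_le_of_ne (dps_nonneg x) fun h => hx (dotProduct_self_eq_zero.mp h.symm)
    calc (0:ℝ) < c * (x ⬝ᵥ x) := by positivity
      _ ≤ x ⬝ᵥ M *ᵥ x := (hb x).1
      _ = star x ⬝ᵥ M *ᵥ x := by rw [star_trivial]
  have hdet : IsUnit M.det := isUnit_iff_ne_zero.2 hpd.det_pos.ne'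
  have hMinv : M * M⁻¹ = 1 := mul_nonsing_inv M hdet
  have hsinv : M⁻¹.IsSymm := by
    show M⁻¹ᵀ = M⁻¹
    rw [transpose_nonsing_inv, hs.eq]
  have hforms : ∀ ξ : Fin d → ℝ,
      C⁻¹ * (ξ ⬝ᵥ ξ) ≤ ξ ⬝ᵥ M⁻¹ *ᵥ ξ ∧ ξ ⬝ᵥ M⁻¹ *ᵥ ξ ≤ c⁻¹ * (ξ ⬝ᵥ ξ) := by
    intro ξ
    set η := M⁻¹ *ᵥ ξ with hη
    have hMη : M *ᵥ η = ξ := by rw [hη, mulVec_mulVec, hMinv, one_mulVec]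
    have hval : ξ ⬝ᵥ M⁻¹ *ᵥ ξ = η ⬝ᵥ M *ᵥ η := by
      rw [hMη, ← hη, dotProduct_comm]
    have hq0 : 0 ≤ ξ ⬝ᵥ M⁻¹ *ᵥ ξ := hval ▸ h0 η
    have hlow : c * (η ⬝ᵥ η) ≤ η ⬝ᵥ M *ᵥ η := (hb η).1
    have hξξ : 0 ≤ ξ ⬝ᵥ ξ := dps_nonneg ξ
    have hηη : 0 ≤ η ⬝ᵥ η := dps_nonneg η
    constructor
    · -- lower bound
      rw [inv_mul_eq_div, div_le_iff₀ hC, hval]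
      have hcs := cs_form M hs h0 ξ η
      rw [hMη] at hcs
      have hback : η ⬝ᵥ ξ = η ⬝ᵥ M *ᵥ η := by rw [hMη]
      rw [hback] at hcs
      have hub := (hb ξ).2
      rcases (dps_nonneg ξ).eq_or_lt with h | h
      · nlinarith [h0 η, hC]
      · nlinarith [mul_le_mul_of_nonneg_right hub (h0 η), h]
    · -- upper bound
      rw [inv_mul_eq_div, le_div_iff₀ hc, hval]
      have hid : ∀ x : Fin d → ℝ, 0 ≤ x ⬝ᵥ (1 : Matrix (Fin d) (Fin d) ℝ) *ᵥ x := by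
        intro x; rw [one_mulVec]; exact dps_nonneg x
      have hcs := cs_form 1 isSymm_one hid ξ η
      rw [one_mulVec, one_mulVec] at hcs
      have h1 : ξ ⬝ᵥ η = η ⬝ᵥ M *ᵥ η := by rw [hval]
      rw [h1] at hcs
      have hlow := (hb η).1
      rcases (h0 η).eq_or_lt with h | h
      · nlinarith [hξξ, hc]
      · nlinarith [hcs, hlow, hξξ, hηη, mul_le_mul_of_nonneg_left hlow hξξ, h]
  have hentries : ∀ i j, |M⁻¹ i j| ≤ c⁻¹ := by
    intro i j
    refine entry_abs_le M⁻¹ hsinv c⁻¹ (fun x => ?_) (fun x => (hforms x).2) i j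
    exact le_trans (mul_nonneg (by positivity) (dps_nonneg x)) (hforms x).1
  exact ⟨hMinv, hsinv, hforms, hentries⟩


lemma measurable_det (M : Ω → Matrix (Fin d) (Fin d) ℝ)
    (h : ∀ i j, Measurable fun ω => M ω i j) : Measurable fun ω => (M ω).det := by
  simp only [Matrix.det_apply']
  exact Finset.measurable_sum _ fun σ _ =>
    (Finset.measurable_prod _ fun i _ => h _ _).const_mul _

lemma measurable_inv_entry (M : Ω → Matrix (Fin d) (Fin d) ℝ)
    (h : ∀ i j, Measurable fun ω => M ω i j) (i j : Fin d) :
    Measurable fun ω => (M ω)⁻¹ i j := by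
  simp only [Matrix.inv_def, Matrix.smul_apply, Ring.inverse_eq_inv, smul_eq_mul,
    Matrix.adjugate_apply]
  refine ((measurable_det M h).inv).mul (measurable_det _ ?_)
  intro a b
  simp only [Matrix.updateRow_apply]
  split_ifs
  · exact measurable_const
  · exact h a b

noncomputable def dpCLM (d : ℕ) (v : Fin d → ℝ) : (Fin d → ℝ) →L[ℝ] ℝ :=
  LinearMap.toContinuousLinearMap
    { toFun := fun x => v ⬝ᵥ x
      map_add' := fun x y => dotProduct_add v x y
      map_smul' := fun r x => by simp [dotProduct_smul, smul_eq_mul] }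

@[simp] lemma dpCLM_apply (v x : Fin d → ℝ) : dpCLM d v x = v ⬝ᵥ x := rfl

end RelaxedAux

open RelaxedAux

theorem relaxed_minimisation {Ω : Type*} [MeasurableSpace Ω] (ℙ : Measure Ω)
    [IsProbabilityMeasure ℙ] (d : ℕ) (A : Ω → Matrix (Fin d) (Fin d) ℝ)
    (hmeas : ∀ i j, Measurable fun ω => A ω i j) (c C : ℝ) (hc : 0 < c) (hcC : c ≤ C)
    (hA : ∀ᵐ ω ∂ℙ, (A ω).IsSymm ∧ ∀ ξ : Fin d → ℝ,
      c * (ξ ⬝ᵥ ξ) ≤ ξ ⬝ᵥ (A ω).mulVec ξ ∧ ξ ⬝ᵥ (A ω).mulVec ξ ≤ C * (ξ ⬝ᵥ ξ))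
    (e : Fin d → ℝ)
    (B : Matrix (Fin d) (Fin d) ℝ) (hB : ∀ i j, B i j = ∫ ω, (A ω)⁻¹ i j ∂ℙ) :
    sInf {r : ℝ | ∃ V : Ω → Fin d → ℝ, MemLp V 2 ℙ ∧ (∫ ω, V ω ∂ℙ) = 0 ∧
        r = ∫ ω, (e + V ω) ⬝ᵥ (A ω).mulVec (e + V ω) ∂ℙ}
      = e ⬝ᵥ B⁻¹.mulVec e ∧
    (MemLp (fun ω => (A ω)⁻¹.mulVec (B⁻¹.mulVec e) - e) 2 ℙ ∧
      (∫ ω, ((A ω)⁻¹.mulVec (B⁻¹.mulVec e) - e) ∂ℙ) = 0 ∧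
      (∫ ω, (e + ((A ω)⁻¹.mulVec (B⁻¹.mulVec e) - e)) ⬝ᵥ
          (A ω).mulVec (e + ((A ω)⁻¹.mulVec (B⁻¹.mulVec e) - e)) ∂ℙ)
        = e ⬝ᵥ B⁻¹.mulVec e) ∧
    (∀ V : Ω → Fin d → ℝ, MemLp V 2 ℙ → (∫ ω, V ω ∂ℙ) = 0 →
      (∫ ω, (e + V ω) ⬝ᵥ (A ω).mulVec (e + V ω) ∂ℙ) = e ⬝ᵥ B⁻¹.mulVec e →
      V =ᵐ[ℙ] fun ω => (A ω)⁻¹.mulVec (B⁻¹.mulVec e) - e) := by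
  classical
  have hC : 0 < C := lt_of_lt_of_le hc hcC
  -- a.e. package of matrix facts
  have hpkg : ∀ᵐ ω ∂ℙ, (A ω).IsSymm ∧
      (∀ ξ : Fin d → ℝ, c * (ξ ⬝ᵥ ξ) ≤ ξ ⬝ᵥ (A ω) *ᵥ ξ ∧ ξ ⬝ᵥ (A ω) *ᵥ ξ ≤ C * (ξ ⬝ᵥ ξ)) ∧
      (A ω) * (A ω)⁻¹ = 1 ∧ (A ω)⁻¹.IsSymm ∧
      (∀ ξ : Fin d → ℝ, C⁻¹ * (ξ ⬝ᵥ ξ) ≤ ξ ⬝ᵥ (A ω)⁻¹ *ᵥ ξ ∧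
        ξ ⬝ᵥ (A ω)⁻¹ *ᵥ ξ ≤ c⁻¹ * (ξ ⬝ᵥ ξ)) ∧
      (∀ i j, |(A ω)⁻¹ i j| ≤ c⁻¹) := by
    filter_upwards [hA] with ω hω
    obtain ⟨h1, h2⟩ := hω
    obtain ⟨m1, m2, m3, m4⟩ := matrix_package (A ω) c C hc hC h1 h2
    exact ⟨h1, h2, m1, m2, m3, m4⟩
  have hminv : ∀ i j, Measurable fun ω => (A ω)⁻¹ i j := measurable_inv_entry A hmeas
  have hAinvInt : ∀ i j, Integrable (fun ω => (A ω)⁻¹ i j) ℙ := by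
    intro i j
    refine Integrable.mono' (integrable_const c⁻¹) (hminv i j).aestronglyMeasurable ?_
    filter_upwards [hpkg] with ω h
    simpa [Real.norm_eq_abs] using h.2.2.2.2.2 i j
  -- expansion of quadratic forms in A⁻¹
  have hexp : ∀ ξ : Fin d → ℝ, (fun ω => ξ ⬝ᵥ (A ω)⁻¹ *ᵥ ξ)
      = fun ω => ∑ i, ∑ j, ξ i * ((A ω)⁻¹ i j * ξ j) := by
    intro ξ; funext ω; simp [dotProduct, mulVec, Finset.mul_sum]
  have hterm_int : ∀ (ξ : Fin d → ℝ) i j, Integrable (fun ω => ξ i * ((A ω)⁻¹ i j * ξ j)) ℙ :=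
    fun ξ i j => ((hAinvInt i j).mul_const _).const_mul _
  have hAinvQint : ∀ ξ : Fin d → ℝ, Integrable (fun ω => ξ ⬝ᵥ (A ω)⁻¹ *ᵥ ξ) ℙ := by
    intro ξ
    rw [hexp ξ]
    exact integrable_finset_sum _ fun i _ => integrable_finset_sum _ fun j _ => hterm_int ξ i j
  have hform : ∀ ξ : Fin d → ℝ, ∫ ω, ξ ⬝ᵥ (A ω)⁻¹ *ᵥ ξ ∂ℙ = ξ ⬝ᵥ B *ᵥ ξ := by
    intro ξ
    rw [hexp ξ, integral_finset_sum _
      (fun i _ => integrable_finset_sum _ fun j _ => hterm_int ξ i j)]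
    have hrow : ∀ i, ∫ ω, ∑ j, ξ i * ((A ω)⁻¹ i j * ξ j) ∂ℙ = ∑ j, ξ i * (B i j * ξ j) := by
      intro i
      rw [integral_finset_sum _ fun j _ => hterm_int ξ i j]
      refine Finset.sum_congr rfl fun j _ => ?_
      rw [integral_const_mul, integral_mul_const, ← hB i j]
    rw [Finset.sum_congr rfl fun i _ => hrow i]
    simp [dotProduct, mulVec, Finset.mul_sum]
  -- B is symmetric positive definite
  have hBsymm : B.IsSymm := by
    refine Matrix.IsSymm.ext fun i j => ?_
    rw [hB, hB]
    refine integral_congr_ae ?_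
    filter_upwards [hpkg] with ω h
    exact h.2.2.2.1.apply i j
  have hBpd : B.PosDef := by
    refine Matrix.PosDef.of_dotProduct_mulVec_pos ?_ ?_
    · ext i j
      rw [conjTranspose_apply, star_trivial, hBsymm.apply]
    · intro x hx
      have hxx : 0 < x ⬝ᵥ x :=
        lt_of_le_of_ne (dps_nonneg x) fun h => hx (dotProduct_self_eq_zero.mp h.symm)
      have hmono : C⁻¹ * (x ⬝ᵥ x) ≤ x ⬝ᵥ B *ᵥ x := by
        rw [← hform x]
        calc C⁻¹ * (x ⬝ᵥ x) = ∫ _ω, C⁻¹ * (x ⬝ᵥ x) ∂ℙ := by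
              rw [integral_const, probReal_univ, one_smul]
          _ ≤ ∫ ω, x ⬝ᵥ (A ω)⁻¹ *ᵥ x ∂ℙ := by
              refine integral_mono_ae (integrable_const _) (hAinvQint x) ?_
              filter_upwards [hpkg] with ω h
              exact (h.2.2.2.2.1 x).1
      have : (0:ℝ) < x ⬝ᵥ B *ᵥ x := lt_of_lt_of_le (by positivity) hmono
      simpa [star_trivial] using this
  have hdetB : IsUnit B.det := isUnit_iff_ne_zero.2 hBpd.det_pos.ne'
  have hBmul : B * B⁻¹ = 1 := mul_nonsing_inv B hdetB
  set lam : Fin d → ℝ := B⁻¹.mulVec e with hlam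
  have hBl : B *ᵥ lam = e := by rw [hlam, mulVec_mulVec, hBmul, one_mulVec]
  -- the optimal field u = A⁻¹ lam
  have huMeas : Measurable fun ω => (A ω)⁻¹ *ᵥ lam := by
    refine measurable_pi_lambda _ fun i => ?_
    simp only [mulVec, dotProduct]
    exact Finset.measurable_sum _ fun j _ => (hminv i j).mul_const _
  have hu_bd : ∀ᵐ ω ∂ℙ, ‖(A ω)⁻¹ *ᵥ lam‖ ≤ c⁻¹ * ∑ j, |lam j| := by
    filter_upwards [hpkg] with ω h
    rw [pi_norm_le_iff_of_nonneg (by positivity)]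
    intro i
    rw [Real.norm_eq_abs]
    calc |((A ω)⁻¹ *ᵥ lam) i| = |∑ j, (A ω)⁻¹ i j * lam j| := by simp [mulVec, dotProduct]
      _ ≤ ∑ j, |(A ω)⁻¹ i j * lam j| := Finset.abs_sum_le_sum_abs _ _
      _ ≤ ∑ j, c⁻¹ * |lam j| := by
          refine Finset.sum_le_sum fun j _ => ?_
          rw [abs_mul]
          exact mul_le_mul_of_nonneg_right (h.2.2.2.2.2 i j) (abs_nonneg _)
      _ = c⁻¹ * ∑ j, |lam j| := by rw [Finset.mul_sum]
  have huMem : MemLp (fun ω => (A ω)⁻¹ *ᵥ lam) 2 ℙ :=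
    MemLp.of_bound huMeas.aestronglyMeasurable _ hu_bd
  have huInt : Integrable (fun ω => (A ω)⁻¹ *ᵥ lam) ℙ := huMem.integrable one_le_two
  have h_int_u : (∫ ω, (A ω)⁻¹ *ᵥ lam ∂ℙ) = B *ᵥ lam := by
    funext i
    have h1 := (ContinuousLinearMap.proj (R := ℝ) (φ := fun _ : Fin d => ℝ) i).integral_comp_comm
      huInt
    simp only [ContinuousLinearMap.proj_apply] at h1
    rw [← h1]
    have hexp2 : (fun ω => ((A ω)⁻¹ *ᵥ lam) i) = fun ω => ∑ j, (A ω)⁻¹ i j * lam j := by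
      funext ω; simp [mulVec, dotProduct]
    rw [hexp2, integral_finset_sum _ fun j _ => (hAinvInt i j).mul_const _]
    simp only [integral_mul_const]
    simp [mulVec, dotProduct, hB]
  -- the candidate minimiser
  set Vs : Ω → Fin d → ℝ := fun ω => (A ω)⁻¹.mulVec lam - e with hVs
  have hVsMem : MemLp Vs 2 ℙ := huMem.sub (memLp_const e)
  have hVsInt0 : (∫ ω, Vs ω ∂ℙ) = 0 := by
    simp only [hVs]
    rw [integral_sub huInt (integrable_const e), h_int_u, hBl, integral_const, probReal_univ,
      one_smul, sub_self]
  -- value at the candidate minimiser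
  have hVsval : (∫ ω, (e + Vs ω) ⬝ᵥ (A ω).mulVec (e + Vs ω) ∂ℙ) = e ⬝ᵥ lam := by
    have hcong : (fun ω => (e + Vs ω) ⬝ᵥ (A ω) *ᵥ (e + Vs ω))
        =ᵐ[ℙ] fun ω => lam ⬝ᵥ ((A ω)⁻¹ *ᵥ lam) := by
      filter_upwards [hpkg] with ω h
      have heq : e + Vs ω = (A ω)⁻¹ *ᵥ lam := by simp only [hVs]; abel
      have hAu : (A ω) *ᵥ ((A ω)⁻¹ *ᵥ lam) = lam := by
        rw [mulVec_mulVec, h.2.2.1, one_mulVec]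
      rw [heq, hAu, dotProduct_comm]
    rw [integral_congr_ae hcong]
    have h2 := (dpCLM d lam).integral_comp_comm huInt
    simp only [dpCLM_apply] at h2
    rw [h2, h_int_u, hBl, dotProduct_comm]
  -- the key estimate and rigidity
  have hkey : ∀ V : Ω → Fin d → ℝ, MemLp V 2 ℙ → (∫ ω, V ω ∂ℙ) = 0 →
      lam ⬝ᵥ e ≤ (∫ ω, (e + V ω) ⬝ᵥ (A ω).mulVec (e + V ω) ∂ℙ) ∧
      ((∫ ω, (e + V ω) ⬝ᵥ (A ω).mulVec (e + V ω) ∂ℙ) = lam ⬝ᵥ e → V =ᵐ[ℙ] Vs) := by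
    intro V hV hV0
    have hVint : Integrable V ℙ := hV.integrable one_le_two
    have hWmem : MemLp (fun ω => e + V ω) 2 ℙ := (memLp_const e).add hV
    have hWint : Integrable (fun ω => e + V ω) ℙ := hWmem.integrable one_le_two
    have h_int_W : (∫ ω, e + V ω ∂ℙ) = e := by
      rw [integral_add (integrable_const e) hVint, hV0, add_zero, integral_const, probReal_univ,
        one_smul]
    have hWaesm : AEStronglyMeasurable (fun ω => e + V ω) ℙ := hWmem.aestronglyMeasurable
    have hWia : ∀ i, AEStronglyMeasurable (fun ω => (e + V ω) i) ℙ := fun i =>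
      (continuous_apply i).comp_aestronglyMeasurable hWaesm
    have hWi2 : ∀ i, MemLp (fun ω => (e + V ω) i) 2 ℙ := by
      intro i
      have := (ContinuousLinearMap.proj (R := ℝ) (φ := fun _ : Fin d => ℝ) i).comp_memLp' hWmem
      simpa [Function.comp_def] using this
    have hWWint : Integrable (fun ω => (e + V ω) ⬝ᵥ (e + V ω)) ℙ := by
      have hx : (fun ω => (e + V ω) ⬝ᵥ (e + V ω)) = fun ω => ∑ i, ((e + V ω) i) ^ 2 := by
        funext ω; simp [dotProduct, sq]
      rw [hx]
      exact integrable_finset_sum _ fun i _ => (hWi2 i).integrable_sq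
    have hQaesm : AEStronglyMeasurable (fun ω => (e + V ω) ⬝ᵥ (A ω) *ᵥ (e + V ω)) ℙ := by
      have hx : (fun ω => (e + V ω) ⬝ᵥ (A ω) *ᵥ (e + V ω))
          = fun ω => ∑ i, (e + V ω) i * ∑ j, A ω i j * (e + V ω) j := by
        funext ω; simp [dotProduct, mulVec]
      rw [hx]
      exact Finset.aestronglyMeasurable_fun_sum _ fun i _ =>
        (hWia i).mul (Finset.aestronglyMeasurable_fun_sum _ fun j _ =>
          ((hmeas i j).aestronglyMeasurable).mul (hWia j))
    have hQint : Integrable (fun ω => (e + V ω) ⬝ᵥ (A ω) *ᵥ (e + V ω)) ℙ := by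
      refine Integrable.mono' (hWWint.const_mul C) hQaesm ?_
      filter_upwards [hpkg] with ω h
      have h1 := (h.2.1 (e + V ω)).1
      have h2 := (h.2.1 (e + V ω)).2
      have h0 : 0 ≤ (e + V ω) ⬝ᵥ (e + V ω) := dps_nonneg _
      rw [Real.norm_eq_abs, abs_of_nonneg (le_trans (mul_nonneg hc.le h0) h1)]
      exact h2
    have hlW : Integrable (fun ω => lam ⬝ᵥ (e + V ω)) ℙ := by
      have := (dpCLM d lam).integrable_comp hWint
      simpa [Function.comp_def] using this
    have h_int_lW : ∫ ω, lam ⬝ᵥ (e + V ω) ∂ℙ = lam ⬝ᵥ e := by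
      have h1 := (dpCLM d lam).integral_comp_comm hWint
      simp only [dpCLM_apply] at h1
      rw [h1, h_int_W]
    have hlu : Integrable (fun ω => lam ⬝ᵥ (A ω)⁻¹ *ᵥ lam) ℙ := hAinvQint lam
    have h_int_lu : ∫ ω, lam ⬝ᵥ (A ω)⁻¹ *ᵥ lam ∂ℙ = lam ⬝ᵥ e := by
      rw [hform lam, hBl]
    -- pointwise expansion
    have hpt : (fun ω => (e + V ω - (A ω)⁻¹ *ᵥ lam) ⬝ᵥ (A ω) *ᵥ (e + V ω - (A ω)⁻¹ *ᵥ lam))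
        =ᵐ[ℙ] fun ω => (e + V ω) ⬝ᵥ (A ω) *ᵥ (e + V ω) - 2 * (lam ⬝ᵥ (e + V ω))
          + lam ⬝ᵥ (A ω)⁻¹ *ᵥ lam := by
      filter_upwards [hpkg] with ω h
      have hs := h.1
      set uω : Fin d → ℝ := (A ω)⁻¹ *ᵥ lam with huω
      have hAu : (A ω) *ᵥ uω = lam := by rw [huω, mulVec_mulVec, h.2.2.1, one_mulVec]
      have e1 : uω ⬝ᵥ (A ω) *ᵥ (e + V ω) = lam ⬝ᵥ (e + V ω) := by
        rw [dotProduct_mulVec, ← hs.eq, vecMul_transpose, hAu]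
      have e2 : (e + V ω) ⬝ᵥ (A ω) *ᵥ uω = lam ⬝ᵥ (e + V ω) := by
        rw [hAu, dotProduct_comm]
      have e3 : uω ⬝ᵥ (A ω) *ᵥ uω = lam ⬝ᵥ uω := by
        rw [hAu, dotProduct_comm]
      simp only [mulVec_sub, sub_dotProduct, dotProduct_sub]
      rw [e1, e2, e3]
      ring
    have hFint : Integrable
        (fun ω => (e + V ω - (A ω)⁻¹ *ᵥ lam) ⬝ᵥ (A ω) *ᵥ (e + V ω - (A ω)⁻¹ *ᵥ lam)) ℙ :=
      ((hQint.sub (hlW.const_mul 2)).add hlu).congr hpt.symm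
    have h_int_F : ∫ ω, (e + V ω - (A ω)⁻¹ *ᵥ lam) ⬝ᵥ (A ω) *ᵥ (e + V ω - (A ω)⁻¹ *ᵥ lam) ∂ℙ
        = (∫ ω, (e + V ω) ⬝ᵥ (A ω) *ᵥ (e + V ω) ∂ℙ) - lam ⬝ᵥ e := by
      rw [integral_congr_ae hpt,
        integral_add (f := fun ω => (e + V ω) ⬝ᵥ (A ω) *ᵥ (e + V ω) - 2 * (lam ⬝ᵥ (e + V ω)))
          (g := fun ω => lam ⬝ᵥ (A ω)⁻¹ *ᵥ lam) (hQint.sub (hlW.const_mul 2)) hlu,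
        integral_sub (f := fun ω => (e + V ω) ⬝ᵥ (A ω) *ᵥ (e + V ω))
          (g := fun ω => 2 * (lam ⬝ᵥ (e + V ω))) hQint (hlW.const_mul 2),
        integral_const_mul, h_int_lW, h_int_lu]
      ring
    have hF0 : 0 ≤ᵐ[ℙ] fun ω =>
        (e + V ω - (A ω)⁻¹ *ᵥ lam) ⬝ᵥ (A ω) *ᵥ (e + V ω - (A ω)⁻¹ *ᵥ lam) := by
      filter_upwards [hpkg] with ω h
      exact le_trans (mul_nonneg hc.le (dps_nonneg _)) (h.2.1 _).1
    have h_int_F0 : 0 ≤ ∫ ω, (e + V ω - (A ω)⁻¹ *ᵥ lam) ⬝ᵥ (A ω) *ᵥ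
        (e + V ω - (A ω)⁻¹ *ᵥ lam) ∂ℙ := integral_nonneg_of_ae hF0
    constructor
    · linarith [h_int_F, h_int_F0]
    · intro hval
      have hFz : (fun ω => (e + V ω - (A ω)⁻¹ *ᵥ lam) ⬝ᵥ (A ω) *ᵥ (e + V ω - (A ω)⁻¹ *ᵥ lam))
          =ᵐ[ℙ] 0 := by
        refine (integral_eq_zero_iff_of_nonneg_ae hF0 hFint).mp ?_
        rw [h_int_F, hval, sub_self]
      filter_upwards [hpkg, hFz] with ω h hz
      have h1 := (h.2.1 (e + V ω - (A ω)⁻¹ *ᵥ lam)).1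
      have hz' : (e + V ω - (A ω)⁻¹ *ᵥ lam) ⬝ᵥ (A ω) *ᵥ (e + V ω - (A ω)⁻¹ *ᵥ lam) = 0 := hz
      rw [hz'] at h1
      have hZZ : (e + V ω - (A ω)⁻¹ *ᵥ lam) ⬝ᵥ (e + V ω - (A ω)⁻¹ *ᵥ lam) = 0 := by
        have := dps_nonneg (e + V ω - (A ω)⁻¹ *ᵥ lam)
        nlinarith [hc]
      have hZ0 : e + V ω - (A ω)⁻¹ *ᵥ lam = 0 := dotProduct_self_eq_zero.mp hZZ
      have : V ω = (A ω)⁻¹ *ᵥ lam - e := by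
        have h2 : e + V ω = (A ω)⁻¹ *ᵥ lam := sub_eq_zero.mp hZ0
        rw [← h2]; abel
      simp only [hVs]
      exact this
  -- assemble the three claims
  refine ⟨?_, ⟨hVsMem, hVsInt0, hVsval⟩, ?_⟩
  · have hmem : (e ⬝ᵥ lam) ∈ {r : ℝ | ∃ V : Ω → Fin d → ℝ, MemLp V 2 ℙ ∧ (∫ ω, V ω ∂ℙ) = 0 ∧
        r = ∫ ω, (e + V ω) ⬝ᵥ (A ω).mulVec (e + V ω) ∂ℙ} :=
      ⟨Vs, hVsMem, hVsInt0, hVsval.symm⟩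
    have hlb : ∀ r ∈ {r : ℝ | ∃ V : Ω → Fin d → ℝ, MemLp V 2 ℙ ∧ (∫ ω, V ω ∂ℙ) = 0 ∧
        r = ∫ ω, (e + V ω) ⬝ᵥ (A ω).mulVec (e + V ω) ∂ℙ}, e ⬝ᵥ lam ≤ r := by
      rintro r ⟨V, hVm, hV0, rfl⟩
      have := (hkey V hVm hV0).1
      rwa [dotProduct_comm e lam]
    exact le_antisymm (csInf_le ⟨e ⬝ᵥ lam, fun r hr => hlb r hr⟩ hmem)
      (le_csInf ⟨e ⬝ᵥ lam, hmem⟩ hlb)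
  · intro V hVm hV0 hval
    refine (hkey V hVm hV0).2 ?_
    rw [hval, dotProduct_comm]
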